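/- Let M = Γ(G,u) be a representable pseudo MV-algebra. The following are equivalent: (i) G is two-divisible and there exists h ∈ C(G) with h + h = u; (ii) M is dense in G (for each g ∈ G with g ≥ 0 there exist x ∈ M and n ∈ ℕ with g = n·x) and M has a strict square root. -/

import Mathlib

section Core

variable {G : Type} [Lattice G] [AddGroup G]

/-- `u` is a strong unit of the ℓ-group `G`. -/
def IsStrongUnit (u : G) : Prop :=
  0 ≤ u ∧ ∀ g : G, ∃ n : ℕ, 1 ≤ n ∧ g ≤ n • u

/-- Truncated addition `x ⊕ y = (x + y) ⊓ u` of the pseudo MV-algebra `Γ(G,u)`. -/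
def oplus (u x y : G) : G := (x + y) ⊓ u

/-- Left negation `x⁻ = u - x`. -/
def negl (u x : G) : G := u - x

/-- Right negation `x~ = -x + u`. -/
def negr (u x : G) : G := -x + u

/-- `x ⊙ y = (x - u + y) ⊔ 0`. -/
def odot (u x y : G) : G := (x - u + y) ⊔ 0

/-- `r` is a square root on the pseudo MV-algebra `M = Γ(G,u)`:
it maps `M` to `M` and satisfies (Sq1), (Sq2), (Sq3). -/
def IsSquareRoot (u : G) (r : G → G) : Prop :=
  (∀ x, 0 ≤ x → x ≤ u → 0 ≤ r x ∧ r x ≤ u) ∧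
  (∀ x, 0 ≤ x → x ≤ u → odot u (r x) (r x) = x) ∧
  (∀ x y, 0 ≤ x → x ≤ u → 0 ≤ y → y ≤ u → odot u y y ≤ x → y ≤ r x) ∧
  (∀ x, 0 ≤ x → x ≤ u → r (negl u x) = oplus u (negl u (r x)) (r 0)) ∧
  (∀ x, 0 ≤ x → x ≤ u → r (negr u x) = oplus u (r 0) (negr u (r x)))

/-- `r` is strict: `r 0 = r 0⁻`. -/
def IsStrict (u : G) (r : G → G) : Prop := r 0 = negl u (r 0)

end Core

/-- An additive structure is two-divisible if every element is `h + h` for some `h`. -/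
def TwoDivisible (A : Type) [Add A] : Prop := ∀ g : A, ∃ h : A, h + h = g
/-- A bundled linearly ordered (not necessarily abelian) group with a strong unit;
`Γ((K i).carrier, (K i).u)` is then a linearly ordered pseudo MV-algebra. -/
structure LinUnitalGroup : Type 1 where
  carrier : Type
  [grp : AddGroup carrier]
  [lin : LinearOrder carrier]
  covl : ∀ a b c : carrier, b ≤ c → a + b ≤ a + c
  covr : ∀ a b c : carrier, b ≤ c → b + a ≤ c + a
  u : carrier
  u_nonneg : 0 ≤ u
  strong : ∀ g : carrier, ∃ n : ℕ, 1 ≤ n ∧ g ≤ n • u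

attribute [instance] LinUnitalGroup.grp LinUnitalGroup.lin

namespace Stmt10Aux
variable {G : Type} [Lattice G] [AddGroup G]
    [CovariantClass G G (· + ·) (· ≤ ·)]
    [CovariantClass G G (Function.swap (· + ·)) (· ≤ ·)]

lemma nsmul_nonneg' {a : G} (ha : 0 ≤ a) : ∀ n : ℕ, 0 ≤ n • a := by
  intro n; induction n with
  | zero => simp
  | succ n ih => rw [succ_nsmul]; exact add_nonneg ih ha

lemma nsmul_mono_nat {a : G} (ha : 0 ≤ a) {m n : ℕ} (h : m ≤ n) : m • a ≤ n • a := by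
  obtain ⟨t, rfl⟩ := Nat.exists_eq_add_of_le h
  rw [add_nsmul]; exact le_add_of_nonneg_right (nsmul_nonneg' ha t)

lemma inf_add_le₃ {a b c : G} (ha : 0 ≤ a) (hb : 0 ≤ b) (hc : 0 ≤ c) :
    a ⊓ (b + c) ≤ (a ⊓ b) + (a ⊓ c) := by
  have h1 : a ⊓ (b + c) ≤ (a ⊓ b) + c := by
    have h0 : a ⊓ (b + c) ≤ (a + c) ⊓ (b + c) :=
      le_inf (inf_le_left.trans (le_add_of_nonneg_right hc)) inf_le_right
    rwa [← inf_add] at h0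
  have h2 : a ⊓ (b + c) ≤ a ⊓ ((a ⊓ b) + c) := le_inf inf_le_left h1
  have h3 : a ⊓ ((a ⊓ b) + c) = (a ⊓ b) + ((-(a ⊓ b) + a) ⊓ c) := by
    rw [add_inf, add_neg_cancel_left]
  have h4 : (-(a ⊓ b) + a) ⊓ c ≤ a ⊓ c := by
    refine inf_le_inf_right c ?_
    have : -(a ⊓ b) ≤ 0 := neg_nonpos.mpr (le_inf ha hb)
    calc -(a ⊓ b) + a ≤ 0 + a := add_le_add_left this a
      _ = a := zero_add a
  calc a ⊓ (b + c) ≤ (a ⊓ b) + ((-(a ⊓ b) + a) ⊓ c) := h3 ▸ h2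
    _ ≤ (a ⊓ b) + (a ⊓ c) := add_le_add_right h4 _

lemma disjoint_nsmul {a b : G} (ha : 0 ≤ a) (hb : 0 ≤ b) (h : a ⊓ b = 0) :
    ∀ n : ℕ, a ⊓ (n • b) = 0 := by
  intro n; induction n with
  | zero => simpa using inf_eq_right.mpr ha
  | succ n ih =>
    refine le_antisymm ?_ (le_inf ha (nsmul_nonneg' hb (n+1)))
    calc a ⊓ ((n+1) • b) = a ⊓ (b + n • b) := by rw [succ_nsmul']
      _ ≤ (a ⊓ b) + (a ⊓ (n • b)) := inf_add_le₃ ha hb (nsmul_nonneg' hb n)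
      _ = 0 := by rw [h, ih, add_zero]

lemma pos_inf_neg_eq_zero (a : G) : (a ⊔ 0) ⊓ ((-a) ⊔ 0) = 0 := by
  have h1 : a + ((-a) ⊔ 0) = a ⊔ 0 := by
    rw [add_sup, add_neg_cancel, add_zero, sup_comm]
  have h2 : a ⊓ 0 = -((-a) ⊔ 0) := by rw [neg_sup, neg_neg, neg_zero, inf_comm]
  calc (a ⊔ 0) ⊓ ((-a) ⊔ 0) = (a + ((-a) ⊔ 0)) ⊓ (0 + ((-a) ⊔ 0)) := by
        rw [h1, zero_add]
    _ = (a ⊓ 0) + ((-a) ⊔ 0) := by rw [inf_add]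
    _ = 0 := by rw [h2, neg_add_cancel]

lemma pospart_add_le (a b : G) : ((a + b) ⊔ 0) ≤ (a ⊔ 0) + (b ⊔ 0) :=
  sup_le (add_le_add le_sup_left le_sup_left)
    (add_nonneg le_sup_right le_sup_right)

lemma pospart_nsmul_le (a : G) : ∀ n : ℕ, ((n • a) ⊔ 0) ≤ n • (a ⊔ 0) := by
  intro n; induction n with
  | zero => simp
  | succ n ih =>
    calc ((n+1) • a) ⊔ 0 = (n • a + a) ⊔ 0 := by rw [succ_nsmul]
      _ ≤ ((n • a) ⊔ 0) + (a ⊔ 0) := pospart_add_le _ _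
      _ ≤ n • (a ⊔ 0) + (a ⊔ 0) := add_le_add_left ih _
      _ = (n+1) • (a ⊔ 0) := (succ_nsmul _ n).symm

/-- every ℓ-group is semiclosed -/
lemma nonneg_of_nsmul_nonneg {a : G} {n : ℕ} (hn : 1 ≤ n) (h : 0 ≤ n • a) : 0 ≤ a := by
  obtain ⟨m, rfl⟩ := Nat.exists_eq_add_of_le hn
  have hkey : -a ≤ m • a := by
    have h1 : (1 + m) • a = a + m • a := by rw [add_nsmul, one_nsmul]
    have h2 : 0 ≤ a + m • a := h1 ▸ h
    have h3 : -a + 0 ≤ -a + (a + m • a) := add_le_add_right h2 _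
    simpa [← add_assoc] using h3
  have h4 : ((-a) ⊔ 0) ≤ m • (a ⊔ 0) := by
    refine sup_le (hkey.trans ((le_sup_left).trans (pospart_nsmul_le a m))) ?_
    exact nsmul_nonneg' le_sup_right m
  have h5 : ((-a) ⊔ 0) = ((-a) ⊔ 0) ⊓ (m • (a ⊔ 0)) := (inf_eq_left.mpr h4).symm
  have h6 : ((-a) ⊔ 0) ⊓ (m • (a ⊔ 0)) = 0 := by
    refine disjoint_nsmul le_sup_right le_sup_right ?_ m
    rw [inf_comm]; exact pos_inf_neg_eq_zero a
  have h7 : -a ≤ 0 := le_sup_left.trans (le_of_eq (h5.trans h6))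
  simpa using neg_nonpos.mp h7

lemma nonpos_of_nsmul_nonpos {a : G} {n : ℕ} (hn : 1 ≤ n) (h : n • a ≤ 0) : a ≤ 0 := by
  have h2 : 0 ≤ n • (-a) := by rw [neg_nsmul]; simpa using neg_nonneg.mpr h
  simpa using neg_nonneg.mp (nonneg_of_nsmul_nonneg hn h2)


section MV
variable (u : G)

lemma oplus_mem {x y : G} (hu0 : 0 ≤ u) (hx : 0 ≤ x) (hy : 0 ≤ y) :
    0 ≤ oplus u x y ∧ oplus u x y ≤ u :=
  ⟨le_inf (add_nonneg hx hy) hu0, inf_le_right⟩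

lemma negl_mem {x : G} (hx : 0 ≤ x) (hxu : x ≤ u) : 0 ≤ negl u x ∧ negl u x ≤ u :=
  ⟨sub_nonneg.mpr hxu, by simpa [negl] using sub_le_sub_left hx u⟩

lemma negr_mem {x : G} (hx : 0 ≤ x) (hxu : x ≤ u) : 0 ≤ negr u x ∧ negr u x ≤ u := by
  constructor
  · have h2 := add_le_add_left hxu (-x)
    simpa [negr] using h2
  · have h2 := add_le_add_right (neg_nonpos.mpr hx) u
    simpa [negr] using h2

lemma odot_mem {x y : G} (hu0 : 0 ≤ u) (hx : 0 ≤ x) (hxu : x ≤ u) (hy : 0 ≤ y) (hyu : y ≤ u) :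
    0 ≤ odot u x y ∧ odot u x y ≤ u := by
  refine ⟨le_sup_right, sup_le ?_ hu0⟩
  calc x - u + y ≤ u - u + u := add_le_add (sub_le_sub_right hxu u) hyu
    _ = u := by rw [sub_self, zero_add]

lemma odot_eq_negr (a b : G) : odot u a b = negr u (oplus u (negl u b) (negl u a)) := by
  unfold odot negr oplus negl
  rw [neg_inf, sup_add, neg_add_cancel]
  congr 1
  rw [neg_add_rev]
  simp [sub_eq_add_neg, neg_add_rev, add_assoc]

end MV

/-- if h commutes with everything in [0,u] for a strong unit u, it is central -/
lemma central_of_interval_comm {u : G} (hu : IsStrongUnit u) {h : G}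
    (hc : ∀ x, 0 ≤ x → x ≤ u → h + x = x + h) : ∀ g : G, h + g = g + h := by
  have key : ∀ n : ℕ, ∀ c : G, 0 ≤ c → c ≤ n • u → AddCommute h c := by
    intro n
    induction n with
    | zero => intro c h0 h1; simp only [zero_nsmul] at h1
              have : c = 0 := le_antisymm h1 h0
              simp [this, AddCommute.zero_right]
    | succ n ih =>
      intro c h0 h1
      set c1 := c ⊓ u with hc1
      have hc1m : 0 ≤ c1 ∧ c1 ≤ u := ⟨le_inf h0 hu.1, inf_le_right⟩
      have hdec : c = c1 + (-c1 + c) := by rw [add_neg_cancel_left]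
      have hc2a : 0 ≤ -c1 + c := by
        have := add_le_add_right (inf_le_left : c1 ≤ c) (-c1)
        exact (neg_add_cancel c1).symm.le.trans this
      have hc2b : -c1 + c ≤ n • u := by
        have : -c1 + c = (0 : G) ⊔ (-u + c) := by
          rw [hc1, neg_inf, sup_add, neg_add_cancel]
        rw [this]
        refine sup_le (nsmul_nonneg' hu.1 n) ?_
        have hcu : c ≤ u + n • u := by rw [← succ_nsmul']; exact h1
        have := add_le_add_left hcu (-u)
        simpa [← add_assoc] using this
      have comm1 : AddCommute h c1 := hc _ hc1m.1 hc1m.2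
      have comm2 : AddCommute h (-c1 + c) := ih _ hc2a hc2b
      rw [hdec]; exact comm1.add_right comm2
  intro g
  have hgp : g + ((-g) ⊔ 0) = g ⊔ 0 := by rw [add_sup, add_neg_cancel, add_zero, sup_comm]
  have hg : g = (g ⊔ 0) - ((-g) ⊔ 0) := by rw [← hgp, add_sub_cancel_right]
  obtain ⟨n1, _, hn1⟩ := hu.2 (g ⊔ 0)
  obtain ⟨n2, _, hn2⟩ := hu.2 ((-g) ⊔ 0)
  have cp : AddCommute h (g ⊔ 0) := key n1 _ le_sup_right hn1
  have cn : AddCommute h ((-g) ⊔ 0) := key n2 _ le_sup_right hn2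
  have : AddCommute h g := by rw [hg, sub_eq_add_neg]; exact cp.add_right cn.neg_right
  exact this

end Stmt10Aux

namespace Stmt10Aux

instance covL (L : LinUnitalGroup) :
    CovariantClass L.carrier L.carrier (· + ·) (· ≤ ·) := ⟨fun a _ _ h => L.covl a _ _ h⟩

instance covR (L : LinUnitalGroup) :
    CovariantClass L.carrier L.carrier (Function.swap (· + ·)) (· ≤ ·) :=
  ⟨fun a _ _ h => L.covr a _ _ h⟩

variable {L : LinUnitalGroup}

lemma lin_add_lt_add_right {a b : L.carrier} (h : a < b) (c : L.carrier) : a + c < b + c :=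
  lt_of_le_of_ne (add_le_add_left h.le c) (fun e => absurd (add_right_cancel e) h.ne)

lemma lin_add_lt_add_left {a b : L.carrier} (h : a < b) (c : L.carrier) : c + a < c + b :=
  lt_of_le_of_ne (add_le_add_right h.le c) (fun e => absurd (add_left_cancel e) h.ne)

lemma lin_double_lt {a b : L.carrier} (h : a < b) : a + a < b + b :=
  (lin_add_lt_add_right h a).trans (lin_add_lt_add_left h b)

lemma lin_half_unique {a b : L.carrier} (h : a + a = b + b) : a = b := by
  rcases lt_trichotomy a b with hl | he | hl
  · exact absurd h (lin_double_lt hl).ne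
  · exact he
  · exact absurd h.symm (lin_double_lt hl).ne

/-- from truncated-square inequalities deduce order, in a linear unital group -/
lemma lin_sq_le {Y Z : L.carrier}
    (h1 : min (Y + Y) L.u ≤ min (Z + Z) L.u)
    (h2 : max (Y + Y - L.u) 0 ≤ max (Z + Z - L.u) 0) : Y ≤ Z := by
  by_contra hlt
  push_neg at hlt
  have hd : Z + Z < Y + Y := lin_double_lt hlt
  rcases le_or_gt L.u (Z + Z) with hc | hc
  · have hz0 : (0 : L.carrier) ≤ Z + Z - L.u := sub_nonneg.mpr hc
    have hle : Y + Y - L.u ≤ Z + Z - L.u := by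
      calc Y + Y - L.u ≤ max (Y + Y - L.u) 0 := le_max_left _ _
        _ ≤ max (Z + Z - L.u) 0 := h2
        _ = Z + Z - L.u := max_eq_left hz0
    have hstrict : Z + Z - L.u < Y + Y - L.u := by
      rw [sub_eq_add_neg, sub_eq_add_neg]; exact lin_add_lt_add_right hd _
    exact absurd hle (not_le.mpr hstrict)
  · have : min (Y + Y) L.u ≤ Z + Z := h1.trans (min_le_left _ _)
    rcases le_total (Y + Y) L.u with hy | hy
    · rw [min_eq_left hy] at this; exact absurd this (not_le.mpr hd)
    · rw [min_eq_right hy] at this; exact absurd this (not_le.mpr hc)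

/-- commutation of the half with all interval elements from min-equalities -/
lemma lin_comm_of_min {A : L.carrier} (hA : A + A = L.u)
    (H : ∀ Z, 0 ≤ Z → Z ≤ L.u → min (A + Z) L.u = min (Z + A) L.u) :
    ∀ Z, 0 ≤ Z → Z ≤ L.u → A + Z = Z + A := by
  have base : ∀ Z, 0 ≤ Z → Z ≤ L.u → Z ≤ A → A + Z = Z + A := by
    intro Z h0 h1 hZA
    have e1 : A + Z ≤ L.u := by rw [← hA]; exact add_le_add_right hZA A
    have e2 : Z + A ≤ L.u := by rw [← hA]; exact add_le_add_left hZA A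
    have := H Z h0 h1
    rwa [min_eq_left e1, min_eq_left e2] at this
  intro Z h0 h1
  rcases le_total Z A with hZA | hAZ
  · exact base Z h0 h1 hZA
  · have hW0 : (0 : L.carrier) ≤ L.u - Z := sub_nonneg.mpr h1
    have hWu : L.u - Z ≤ L.u := by
      have := sub_le_sub_left h0 L.u; simpa using this
    have hWA : L.u - Z ≤ A := by
      calc L.u - Z ≤ L.u - A := sub_le_sub_left hAZ L.u
        _ = A := by rw [← hA, add_sub_cancel_right]
    have hbw := base _ hW0 hWu hWA
    -- A + (u - Z) = (u - Z) + A  ⟹  A + Z = Z + A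
    have hAu : A + L.u = L.u + A := by rw [← hA, add_assoc]
    have e : L.u + (A - Z) = L.u + (-Z + A) := by
      calc L.u + (A - Z) = (L.u + A) - Z := (add_sub_assoc _ _ _).symm
        _ = (A + L.u) - Z := by rw [hAu]
        _ = A + (L.u - Z) := add_sub_assoc _ _ _
        _ = (L.u - Z) + A := hbw
        _ = L.u + (-Z + A) := by rw [sub_eq_add_neg, add_assoc]
    have e2 : A - Z = -Z + A := add_left_cancel e
    have cZA : AddCommute A (-Z) := by rw [sub_eq_add_neg] at e2; exact e2
    have := cZA.neg_right
    rw [neg_neg] at this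
    exact this.eq

end Stmt10Aux


/-- The pseudo MV-algebra `M = Γ(G,u)` is representable: there is a family of linearly
ordered pseudo MV-algebras `Γ((K i).carrier,(K i).u)` and an injective homomorphism
(preserving `⊕`, `⁻`, `~`, `0`, `1`) of `M` into their direct product which is
surjective in each coordinate. -/
def IsRepresentable {G : Type} [Lattice G] [AddGroup G] (u : G) : Prop :=
  ∃ (ι : Type) (K : ι → LinUnitalGroup) (f : G → ∀ i, (K i).carrier),
    (∀ x, 0 ≤ x → x ≤ u → ∀ i, 0 ≤ f x i ∧ f x i ≤ (K i).u) ∧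
    (∀ i, f 0 i = 0) ∧
    (∀ i, f u i = (K i).u) ∧
    (∀ x y, 0 ≤ x → x ≤ u → 0 ≤ y → y ≤ u → ∀ i,
      f (oplus u x y) i = min (f x i + f y i) (K i).u) ∧
    (∀ x, 0 ≤ x → x ≤ u → ∀ i, f (negl u x) i = (K i).u - f x i) ∧
    (∀ x, 0 ≤ x → x ≤ u → ∀ i, f (negr u x) i = -(f x i) + (K i).u) ∧
    (∀ x y, 0 ≤ x → x ≤ u → 0 ≤ y → y ≤ u → (∀ i, f x i = f y i) → x = y) ∧
    (∀ i, ∀ z : (K i).carrier, 0 ≤ z → z ≤ (K i).u →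
      ∃ x, 0 ≤ x ∧ x ≤ u ∧ f x i = z)

/-- for a representable pseudo MV-algebra `M = Γ(G,u)`:
`G` is two-divisible with `u/2 ∈ C(G)` iff `M` is dense in `G` and `M` has a strict
square root. -/
theorem stmt_10 {G : Type} [Lattice G] [AddGroup G]
    [CovariantClass G G (· + ·) (· ≤ ·)]
    [CovariantClass G G (Function.swap (· + ·)) (· ≤ ·)]
    (u : G) (hu : IsStrongUnit u) (hrep : IsRepresentable u) :
    (TwoDivisible G ∧ ∃ h : G, (∀ g : G, h + g = g + h) ∧ h + h = u) ↔
    ((∀ g : G, 0 ≤ g → ∃ (x : G) (n : ℕ), 0 ≤ x ∧ x ≤ u ∧ g = n • x) ∧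
     ∃ r : G → G, IsSquareRoot u r ∧ IsStrict u r) := by
  classical
  open Stmt10Aux in
  constructor
  · -- (i) → (ii)
    rintro ⟨htd, h, hcen, hhu⟩
    have hu0 : 0 ≤ u := hu.1
    have hcomm : ∀ a : G, AddCommute h a := fun a => hcen a
    have hucomm : ∀ a : G, AddCommute u a := fun a => by
      rw [← hhu]; exact (hcomm a).add_left (hcomm a)
    have h0 : 0 ≤ h :=
      nonneg_of_nsmul_nonneg (n := 2) one_le_two (by rw [two_nsmul, hhu]; exact hu0)
    have hhle : h ≤ u := by rw [← hhu]; exact le_add_of_nonneg_left h0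
    choose half hhalf using htd
    have halfmem : ∀ x c : G, 0 ≤ x → x ≤ u → c + c = x → 0 ≤ c ∧ c ≤ h := by
      intro x c h0x h1x hcx
      constructor
      · exact nonneg_of_nsmul_nonneg (n := 2) one_le_two
          (by rw [two_nsmul, hcx]; exact h0x)
      · have e : -h + c = c + -h := ((hcomm c).neg_left).eq
        have key : (c - h) + (c - h) = x - u := by
          calc (c - h) + (c - h) = c + ((-h + c) + -h) := by
                simp only [sub_eq_add_neg, add_assoc]
            _ = c + ((c + -h) + -h) := by rw [e]
            _ = (c + c) - (h + h) := by
                simp only [sub_eq_add_neg, neg_add_rev, add_assoc]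
            _ = x - u := by rw [hcx, hhu]
        have h2 : (2:ℕ) • (c - h) ≤ 0 := by
          rw [two_nsmul, key]; exact sub_nonpos.mpr h1x
        exact sub_nonpos.mp (nonpos_of_nsmul_nonpos one_le_two h2)
    obtain ⟨ι, K, f, hfm, hf0, hfu, hfoplus, hfnegl, hfnegr, hfinj, hfsurj⟩ := hrep
    -- image of odot under f
    have hfodot : ∀ x y, 0 ≤ x → x ≤ u → 0 ≤ y → y ≤ u → ∀ i,
        f (odot u x y) i = max (f x i - (K i).u + f y i) 0 := by
      intro x y hx0 hx1 hy0 hy1 i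
      have hnx := negl_mem u hx0 hx1
      have hny := negl_mem u hy0 hy1
      have hop := oplus_mem u hu0 hny.1 hnx.1
      rw [odot_eq_negr]
      rw [hfnegr _ hop.1 hop.2 i]
      rw [hfoplus _ _ hny.1 hny.2 hnx.1 hnx.2 i]
      rw [hfnegl x hx0 hx1 i, hfnegl y hy0 hy1 i]
      rw [neg_inf, sup_add, neg_add_cancel]
      congr 1
      simp only [sub_eq_add_neg, neg_add_rev, neg_neg, add_assoc, neg_add_cancel_left,
        neg_add_cancel, add_zero]
    -- f is order preserving on the interval
    have hfle : ∀ x y, 0 ≤ x → x ≤ u → 0 ≤ y → y ≤ u → x ≤ y → ∀ i, f x i ≤ f y i := by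
      intro x y hx0 hx1 hy0 hy1 hxy i
      have hw := negr_mem u hy0 hy1
      have hodot0 : odot u (negr u y) x = 0 := by
        unfold odot negr
        rw [add_sub_cancel_right]
        refine sup_eq_right.mpr ?_
        have := add_le_add_left hxy (-y); simpa using this
      have he := hfodot (negr u y) x hw.1 hw.2 hx0 hx1 i
      rw [hodot0, hf0 i, hfnegr y hy0 hy1 i, add_sub_cancel_right] at he
      have h2 : -(f y i) + f x i ≤ 0 := by
        have := le_max_left (-(f y i) + f x i) 0
        rw [← he] at this
        exact this
      have := add_le_add_left h2 (f y i); simpa using this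
    -- f reflects order on the interval
    have hfge : ∀ x y, 0 ≤ x → x ≤ u → 0 ≤ y → y ≤ u →
        (∀ i, f x i ≤ f y i) → x ≤ y := by
      intro x y hx0 hx1 hy0 hy1 hi
      have hw := negr_mem u hy0 hy1
      have hom := odot_mem u hu0 hw.1 hw.2 hx0 hx1
      have hz : odot u (negr u y) x = 0 := by
        refine hfinj _ 0 hom.1 hom.2 le_rfl hu0 ?_
        intro i
        rw [hf0 i, hfodot _ _ hw.1 hw.2 hx0 hx1 i, hfnegr y hy0 hy1 i,
          add_sub_cancel_right]
        exact max_eq_right (by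
          have := add_le_add_left (hi i) (-(f y i)); simpa using this)
      have h2 : negr u y - u + x ≤ 0 := le_sup_left.trans_eq hz
      unfold negr at h2
      rw [add_sub_cancel_right] at h2
      have := add_le_add_left h2 y; simpa using this
    -- the coordinate halves of the unit
    have hAu : ∀ i, f h i + f h i = (K i).u := by
      intro i
      have hop : oplus u h h = u := by unfold oplus; rw [hhu]; exact inf_idem u
      have h1 : min (f h i + f h i) (K i).u = (K i).u := by
        rw [← hfoplus h h h0 hhle h0 hhle i, hop, hfu i]
      have hge : (K i).u ≤ f h i + f h i := min_eq_right_iff.mp h1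
      have ehh : h - u + h = 0 := by
        rw [← hhu]
        simp only [sub_eq_add_neg, neg_add_rev, ← add_assoc, add_neg_cancel, zero_add,
          neg_add_cancel]
      have hod : odot u h h = 0 := by unfold odot; rw [ehh]; exact sup_idem 0
      have h2 : max (f h i - (K i).u + f h i) 0 = 0 := by
        rw [← hfodot h h h0 hhle h0 hhle i, hod, hf0 i]
      have hle2 : f h i - (K i).u + f h i ≤ 0 := h2 ▸ le_max_left _ _
      have hA2 : f h i + f h i ≤ (K i).u := by
        have h3 : f h i - (K i).u ≤ -(f h i) := by
          have := add_le_add_left hle2 (-(f h i))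
          simpa [add_assoc] using this
        have h4 := add_le_add_right h3 (f h i)
        rw [add_neg_cancel] at h4
        have h5 := add_le_add_left h4 (K i).u
        simpa [sub_eq_add_neg, add_assoc] using h5
      exact le_antisymm hA2 hge
    -- the coordinate half commutes with all interval elements
    have hAcomm : ∀ i, ∀ Z : (K i).carrier, 0 ≤ Z → Z ≤ (K i).u →
        f h i + Z = Z + f h i := by
      intro i
      refine lin_comm_of_min (L := K i) (hAu i) ?_
      intro Z hZ0 hZ1
      obtain ⟨x, hx0, hx1, hfx⟩ := hfsurj i Z hZ0 hZ1
      have hco : oplus u h x = oplus u x h := by unfold oplus; rw [hcen x]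
      have e1 := hfoplus h x h0 hhle hx0 hx1 i
      have e2 := hfoplus x h hx0 hx1 h0 hhle i
      rw [hco] at e1
      rw [hfx] at e1 e2
      rw [← e1, ← e2]
    -- cancellation of doubles inside the interval
    have hcancel : ∀ y z, 0 ≤ y → y ≤ u → 0 ≤ z → z ≤ u → y + y ≤ z + z → y ≤ z := by
      intro y z hy0 hy1 hz0 hz1 hyz
      refine hfge y z hy0 hy1 hz0 hz1 ?_
      intro i
      have hmo : oplus u y y ≤ oplus u z z := inf_le_inf_right u hyz
      have hrw : ∀ w : G, w - u + w = w + w - u := by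
        intro w
        have c : AddCommute (-u) w := (hucomm w).neg_left
        calc w - u + w = w + (-u + w) := by rw [sub_eq_add_neg, add_assoc]
          _ = w + (w + -u) := by rw [c.eq]
          _ = w + w - u := by rw [sub_eq_add_neg, add_assoc]
      have hsub : y - u + y ≤ z - u + z := by
        rw [hrw y, hrw z]; exact sub_le_sub_right hyz u
      have hod : odot u y y ≤ odot u z z := sup_le_sup_right hsub 0
      have hmy := oplus_mem u hu0 hy0 hy0
      have hmz := oplus_mem u hu0 hz0 hz0
      have hoy := odot_mem u hu0 hy0 hy1 hy0 hy1
      have hoz := odot_mem u hu0 hz0 hz1 hz0 hz1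
      have f1 := hfle _ _ hmy.1 hmy.2 hmz.1 hmz.2 hmo i
      rw [hfoplus y y hy0 hy1 hy0 hy1 i, hfoplus z z hz0 hz1 hz0 hz1 i] at f1
      have f2 := hfle _ _ hoy.1 hoy.2 hoz.1 hoz.2 hod i
      rw [hfodot y y hy0 hy1 hy0 hy1 i, hfodot z z hz0 hz1 hz0 hz1 i] at f2
      have hcoord : ∀ w, 0 ≤ w → w ≤ u →
          f w i - (K i).u + f w i = f w i + f w i - (K i).u := by
        intro w hw0 hw1
        have c1 : AddCommute (f h i) (f w i) :=
          hAcomm i (f w i) (hfm w hw0 hw1 i).1 (hfm w hw0 hw1 i).2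
        have cu : AddCommute (K i).u (f w i) := by
          rw [← hAu i]; exact c1.add_left c1
        have c : AddCommute (-(K i).u) (f w i) := cu.neg_left
        calc f w i - (K i).u + f w i = f w i + (-(K i).u + f w i) := by
              rw [sub_eq_add_neg, add_assoc]
          _ = f w i + (f w i + -(K i).u) := by rw [c.eq]
          _ = f w i + f w i - (K i).u := by rw [sub_eq_add_neg, add_assoc]
      rw [hcoord y hy0 hy1, hcoord z hz0 hz1] at f2
      exact lin_sq_le f1 f2
    -- halves in the interval are unique
    have halfuniq : ∀ x c d, 0 ≤ x → x ≤ u → c + c = x → d + d = x → c = d := by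
      intro x c d hx0 hx1 hc hd
      have hcm := halfmem x c hx0 hx1 hc
      have hdm := halfmem x d hx0 hx1 hd
      have hcu : c ≤ u := hcm.2.trans hhle
      have hdu : d ≤ u := hdm.2.trans hhle
      exact le_antisymm
        (hcancel c d hcm.1 hcu hdm.1 hdu (by rw [hc, hd]))
        (hcancel d c hdm.1 hdu hcm.1 hcu (by rw [hc, hd]))
    have hhalf0 : half 0 = 0 :=
      halfuniq 0 (half 0) 0 le_rfl hu0 (hhalf 0) (add_zero 0)
    -- the key computation for quarters
    have hkeyl : ∀ x, 0 ≤ x → x ≤ u → half (negl u x) = h - half x := by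
      intro x hx0 hx1
      set d := half x with hddef
      have hdm := halfmem x d hx0 hx1 (hhalf x)
      have hnl := negl_mem u hx0 hx1
      refine halfuniq (negl u x) _ _ hnl.1 hnl.2 (hhalf _) ?_
      have e : -d + h = h + -d := ((hcomm (-d)).eq).symm
      calc (h - d) + (h - d) = h + ((-d + h) + -d) := by
            simp only [sub_eq_add_neg, add_assoc]
        _ = h + ((h + -d) + -d) := by rw [e]
        _ = (h + h) - (d + d) := by
            simp only [sub_eq_add_neg, neg_add_rev, add_assoc]
        _ = u - x := by rw [hhu, hhalf x]
    have hfinal : ∀ d : G, 0 ≤ d → d ≤ h → (h - d) + h = u - d := by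
      intro d _ _
      have e : -d + h = h + -d := ((hcomm (-d)).eq).symm
      calc (h - d) + h = h + (-d + h) := by rw [sub_eq_add_neg, add_assoc]
        _ = h + (h + -d) := by rw [e]
        _ = u - d := by rw [← add_assoc, hhu, sub_eq_add_neg]
    refine ⟨?_, ⟨fun x => half x + h, ⟨?_, ?_, ?_, ?_, ?_⟩, ?_⟩⟩
    · -- density
      intro g hg
      obtain ⟨n, hn1, hgn⟩ := hu.2 g
      have iter : ∀ k : ℕ, ∀ w : G, ∃ c : G, (2 ^ k) • c = w := by
        intro k
        induction k with
        | zero => intro w; exact ⟨w, by simp⟩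
        | succ k ih =>
          intro w
          obtain ⟨c, hc⟩ := ih w
          exact ⟨half c, by rw [pow_succ, mul_nsmul', two_nsmul, hhalf c, hc]⟩
      obtain ⟨x, hx⟩ := iter n g
      have h2n : (1:ℕ) ≤ 2 ^ n := Nat.one_le_two_pow
      have hx0 : 0 ≤ x := nonneg_of_nsmul_nonneg h2n (by rw [hx]; exact hg)
      have hxu : x ≤ u := by
        have hgu : (2 ^ n) • x ≤ (2 ^ n) • u := by
          rw [hx]
          exact hgn.trans (nsmul_mono_nat hu0 (Nat.le_of_lt (Nat.lt_two_pow_self (n := n))))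
        have cxu : AddCommute x (-u) := (hucomm x).symm.neg_right
        have hsmul : (2 ^ n) • (x - u) = (2 ^ n) • x - (2 ^ n) • u := by
          rw [sub_eq_add_neg, cxu.add_nsmul (2 ^ n), neg_nsmul, ← sub_eq_add_neg]
        have hneg : (2 ^ n) • (x - u) ≤ 0 := by
          rw [hsmul]; exact sub_nonpos.mpr hgu
        exact sub_nonpos.mp (nonpos_of_nsmul_nonpos h2n hneg)
      exact ⟨x, 2 ^ n, hx0, hxu, hx.symm⟩
    · -- membership
      intro x hx0 hx1
      have hdm := halfmem x (half x) hx0 hx1 (hhalf x)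
      exact ⟨add_nonneg hdm.1 h0, by rw [← hhu]; exact add_le_add_left hdm.2 h⟩
    · -- Sq1
      intro x hx0 hx1
      set d := half x with hddef
      have c1 : AddCommute (-h) (d + h) :=
        ((hcomm d).neg_left).add_right ((hcomm h).neg_left)
      have e : (d + h) - u + (d + h) = x := by
        calc (d + h) - u + (d + h)
            = (d + h) + (-h + (-h + (d + h))) := by
              rw [← hhu]; simp only [sub_eq_add_neg, neg_add_rev, add_assoc]
          _ = (d + h) + (-h + ((d + h) + -h)) := by rw [c1.eq]
          _ = d + d := by
              simp only [add_assoc, add_neg_cancel_left, add_neg_cancel, add_zero,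
                neg_add_cancel_left]
          _ = x := hhalf x
      show odot u (d + h) (d + h) = x
      unfold odot
      rw [e]
      exact sup_eq_left.mpr hx0
    · -- Sq2
      intro x y hx0 hx1 hy0 hy1 hod
      set d := half x with hddef
      have hdm := halfmem x d hx0 hx1 (hhalf x)
      have h1 : y - u + y ≤ x := le_sup_left.trans hod
      have hrw : y - u + y = y + y - u := by
        have c : AddCommute (-u) y := (hucomm y).neg_left
        calc y - u + y = y + (-u + y) := by rw [sub_eq_add_neg, add_assoc]
          _ = y + (y + -u) := by rw [c.eq]
          _ = y + y - u := by rw [sub_eq_add_neg, add_assoc]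
      rw [hrw] at h1
      have h2 : y + y ≤ x + u := sub_le_iff_le_add.mp h1
      have c1 : AddCommute h d := hcomm d
      have h3 : (d + h) + (d + h) = x + u := by
        calc (d + h) + (d + h) = d + ((h + d) + h) := by simp only [add_assoc]
          _ = d + ((d + h) + h) := by rw [c1.eq]
          _ = (d + d) + (h + h) := by simp only [add_assoc]
          _ = x + u := by rw [hhalf x, hhu]
      have hzm : 0 ≤ d + h ∧ d + h ≤ u :=
        ⟨add_nonneg hdm.1 h0, by rw [← hhu]; exact add_le_add_left hdm.2 h⟩
      exact hcancel y (d + h) hy0 hy1 hzm.1 hzm.2 (by rw [h3]; exact h2)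
    · -- Sq3 left
      intro x hx0 hx1
      show half (negl u x) + h = oplus u (negl u (half x + h)) (half 0 + h)
      rw [hhalf0, zero_add]
      set d := half x with hddef
      have hdm := halfmem x d hx0 hx1 (hhalf x)
      have hrhs : oplus u (negl u (d + h)) h = u - d := by
        unfold oplus negl
        have e : (u - (d + h)) + h = u - d := by
          have e2 : -d + h = h + -d := ((hcomm (-d)).eq).symm
          calc (u - (d + h)) + h = u + (-h + (-d + h)) := by
                simp only [sub_eq_add_neg, neg_add_rev, add_assoc]
            _ = u + (-h + (h + -d)) := by rw [e2]
            _ = u - d := by rw [neg_add_cancel_left, sub_eq_add_neg]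
        rw [e]
        refine inf_eq_left.mpr ?_
        simpa using sub_le_sub_left hdm.1 u
      rw [hkeyl x hx0 hx1, hrhs]
      exact hfinal d hdm.1 hdm.2
    · -- Sq3 right
      intro x hx0 hx1
      show half (negr u x) + h = oplus u (half 0 + h) (negr u (half x + h))
      rw [hhalf0, zero_add]
      set d := half x with hddef
      have hdm := halfmem x d hx0 hx1 (hhalf x)
      have hnrl : negr u x = negl u x := by
        unfold negr negl
        rw [sub_eq_add_neg]
        exact (((hucomm x).neg_right).eq).symm
      have hnr2 : negr u (d + h) = h - d := by
        unfold negr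
        have e2 : -d + u = u + -d := (((hucomm (-d)).eq).symm)
        calc -(d + h) + u = -h + (-d + u) := by
              simp only [neg_add_rev, add_assoc]
          _ = -h + (u + -d) := by rw [e2]
          _ = -h + ((h + h) + -d) := by rw [hhu]
          _ = h - d := by rw [add_assoc, neg_add_cancel_left, sub_eq_add_neg]
      have hrhs : oplus u h (h - d) = u - d := by
        unfold oplus
        have e : h + (h - d) = u - d := by
          rw [sub_eq_add_neg, ← add_assoc, hhu, ← sub_eq_add_neg]
        rw [e]
        refine inf_eq_left.mpr ?_
        simpa using sub_le_sub_left hdm.1 u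
      rw [hnrl, hnr2, hrhs, hkeyl x hx0 hx1]
      exact hfinal d hdm.1 hdm.2
    · -- strict
      show (half 0 + h) = negl u (half 0 + h)
      rw [hhalf0, zero_add]
      unfold negl
      rw [← hhu, add_sub_cancel_right]
  · -- (ii) → (i)
    rintro ⟨hdense, r, hsq, hstrict⟩
    obtain ⟨hmem, hsq1, hsq2, hsq3l, hsq3r⟩ := hsq
    have hu0 : 0 ≤ u := hu.1
    set h := r 0 with hhdef
    have hm : 0 ≤ h ∧ h ≤ u := hmem 0 le_rfl hu0
    have hhu : h + h = u := by
      have hs : h = u - h := hstrict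
      exact eq_sub_iff_add_eq.mp hs
    have ehh0 : h - u + h = 0 := by
      rw [← hhu]
      simp only [sub_eq_add_neg, neg_add_rev, ← add_assoc, add_neg_cancel, zero_add,
        neg_add_cancel]
    have odot_hh : odot u h h = 0 := by
      unfold odot; rw [ehh0]; exact sup_idem 0
    have hle : ∀ x, 0 ≤ x → x ≤ u → h ≤ r x := fun x h0 h1 =>
      hsq2 x h h0 h1 hm.1 hm.2 (by rw [odot_hh]; exact h0)
    have hexact : ∀ x, 0 ≤ x → x ≤ u → r x - u + r x = x := by
      intro x h0 h1
      have hnn : 0 ≤ r x - u + r x := by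
        have h2 : h - u + h ≤ r x - u + r x :=
          add_le_add (sub_le_sub_right (hle x h0 h1) u) (hle x h0 h1)
        rwa [ehh0] at h2
      have h3 := hsq1 x h0 h1
      unfold odot at h3
      rwa [sup_eq_left.mpr hnn] at h3
    have hcomms : ∀ x, 0 ≤ x → x ≤ u → AddCommute h (r x) := by
      intro x h0 h1
      have hsm := hmem x h0 h1
      have hls := hle x h0 h1
      have hnlm := negl_mem u h0 h1
      set s := r x with hsdef
      have ht : r (negl u x) = u - s + h := by
        rw [hsq3l x h0 h1]
        show oplus u (negl u s) h = u - s + h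
        unfold oplus negl
        refine inf_eq_left.mpr ?_
        have e0 : -s + h ≤ 0 := by
          have := add_le_add_left hls (-s); simpa using this
        calc u - s + h = u + (-s + h) := by rw [sub_eq_add_neg, add_assoc]
          _ ≤ u + 0 := add_le_add_right e0 u
          _ = u := add_zero u
      have hex2 := hexact (negl u x) hnlm.1 hnlm.2
      rw [ht] at hex2
      have hex1 : s - u + s = x := hexact x h0 h1
      have e1 : negl u x = (u - s) + (u - s) := by
        show u - x = _
        rw [← hex1]
        simp only [sub_eq_add_neg, neg_add_rev, neg_neg, add_assoc]
      have e2 : (u - s + h) - u + (u - s + h) = (u - s) + (h + (-s + h)) := by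
        simp only [sub_eq_add_neg, neg_add_rev, neg_neg, add_assoc, neg_add_cancel_left,
          neg_add_cancel, add_zero]
      rw [e2, e1] at hex2
      have e4 : h + (-s + h) = u - s := add_left_cancel hex2
      have e5 : -h + (u - s) = -s + h := by rw [← e4, neg_add_cancel_left]
      have e6 : -h + (u - s) = h - s := by
        rw [← hhu, add_sub_assoc, neg_add_cancel_left]
      have e7 : h + -s = -s + h := by rw [← sub_eq_add_neg, ← e6, e5]
      have c1 : AddCommute h (-s) := e7
      have c2 := c1.neg_right
      rwa [neg_neg] at c2
    have hcommx : ∀ x, 0 ≤ x → x ≤ u → h + x = x + h := by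
      intro x h0 h1
      have c2 := hcomms x h0 h1
      have cu : AddCommute h u := by
        rw [← hhu]; exact (AddCommute.refl h).add_right (AddCommute.refl h)
      have c3 : AddCommute h x := by
        rw [← hexact x h0 h1, sub_eq_add_neg]
        exact (c2.add_right cu.neg_right).add_right c2
      exact c3.eq
    have central : ∀ g : G, h + g = g + h := central_of_interval_comm hu hcommx
    have halfint : ∀ x, 0 ≤ x → x ≤ u → (r x - h) + (r x - h) = x := by
      intro x h0 h1
      have c2 := hcomms x h0 h1
      set s := r x with hsdef
      have cus : AddCommute u s := by rw [← hhu]; exact c2.add_left c2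
      have e1 : x = s + s - u := by
        rw [← hexact x h0 h1]
        calc s - u + s = s + (-u + s) := by rw [sub_eq_add_neg, add_assoc]
          _ = s + (s + -u) := by rw [(cus.neg_left).eq]
          _ = s + s - u := by rw [sub_eq_add_neg, add_assoc]
      have ch : -h + s = s + -h := (c2.neg_left).eq
      have e2 : (s - h) + (s - h) = s + s - u := by
        calc (s - h) + (s - h) = s + ((-h + s) + -h) := by
              simp only [sub_eq_add_neg, add_assoc]
          _ = s + ((s + -h) + -h) := by rw [ch]
          _ = s + s - u := by
              rw [← hhu]; simp only [sub_eq_add_neg, neg_add_rev, add_assoc]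
      exact e2.trans e1.symm
    refine ⟨?_, ⟨h, central, hhu⟩⟩
    intro g
    obtain ⟨n, hn1, hng⟩ := hu.2 (-g)
    have hw : 0 ≤ g + n • u := by
      have := add_le_add_right hng g; simpa using this
    obtain ⟨x, m, hx0, hxu, hgw⟩ := hdense (g + n • u) hw
    have hnh2 : n • h + n • h = n • u := by
      rw [← (AddCommute.refl h).add_nsmul n, hhu]
    set c := r x - h with hcdef
    have hcx : c + c = x := halfint x hx0 hxu
    have hmm : m • c + m • c = g + n • u := by
      rw [← (AddCommute.refl c).add_nsmul m, hcx, hgw]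
    have hc1 : AddCommute h (m • c) := central (m • c)
    have hch : AddCommute (-(n • h)) (m • c) := (hc1.nsmul_left n).neg_left
    refine ⟨m • c - n • h, ?_⟩
    calc (m • c - n • h) + (m • c - n • h)
        = m • c + ((-(n • h) + m • c) + -(n • h)) := by
          simp only [sub_eq_add_neg, add_assoc]
      _ = m • c + ((m • c + -(n • h)) + -(n • h)) := by rw [hch.eq]
      _ = (m • c + m • c) - (n • h + n • h) := by
          simp only [sub_eq_add_neg, neg_add_rev, add_assoc]
      _ = (g + n • u) - n • u := by rw [hmm, hnh2]
      _ = g := add_sub_cancel_right _ _
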